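/- Let d ≥ 1, let κ be an integer with 1 ≤ κ ≤ d, and let i be an integer with (κ−1)d − κ(κ−3)/2 ≤ i ≤ κd − κ(κ−1)/2. Let S be the degree-d lex segment of colength d + i in x₁, x₂, x₃. Then exactly d + i + κ monomials of degree d + 1 have no divisor in S; equivalently, the number of degree-(d+1) monomials divisible by at least one element of S equals binom(d+3, 2) − (d + i + κ). (This expresses that the Macaulay growth (d+i)^{⟨d⟩} equals d + i + κ for i in this range.) -/

import Mathlib

/-- Monomials `x₁^a x₂^b x₃^c` of degree `d` in three variables,
encoded as triples `(a, b, c)` with `a + b + c = d`. -/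
def MonDeg (d : ℕ) : Set (ℕ × ℕ × ℕ) := {m | m.1 + m.2.1 + m.2.2 = d}

/-- The lexicographic order on monomials with `x₁ > x₂ > x₃`:
`m < m'` iff `a < a'`, or `a = a'` and `b < b'`. -/
def LexLt (m m' : ℕ × ℕ × ℕ) : Prop :=
  m.1 < m'.1 ∨ (m.1 = m'.1 ∧ m.2.1 < m'.2.1)

/-- The number of degree-`d` monomials lex-smaller than `m`
(so `m` is the `(lexRank d m + 1)`-th lex-smallest degree-`d` monomial). -/
noncomputable def lexRank (d : ℕ) (m : ℕ × ℕ × ℕ) : ℕ :=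
  Set.ncard {m' | m' ∈ MonDeg d ∧ LexLt m' m}

/-- The degree-`d` lex segment of colength `h`:
all degree-`d` monomials except the `h` lex-smallest ones. -/
def LexSeg (d h : ℕ) : Set (ℕ × ℕ × ℕ) := {m | m ∈ MonDeg d ∧ h ≤ lexRank d m}

/-- Divisibility of monomials. -/
def MonDvd (m m' : ℕ × ℕ × ℕ) : Prop :=
  m.1 ≤ m'.1 ∧ m.2.1 ≤ m'.2.1 ∧ m.2.2 ≤ m'.2.2

/-- `m(T)`: the largest index `ℓ ∈ {1, 2, 3}` such that `x_ℓ` divides `T`. -/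
def maxVar (m : ℕ × ℕ × ℕ) : ℕ :=
  if 0 < m.2.2 then 3 else if 0 < m.2.1 then 2 else 1

/-- auxiliary staircase function -/
def gf (D a : ℕ) : ℕ := ∑ j ∈ Finset.range a, (D + 1 - j)

lemma gf_zero (D : ℕ) : gf D 0 = 0 := by simp [gf]

lemma gf_succ (D a : ℕ) : gf D (a+1) = gf D a + (D + 1 - a) :=
  Finset.sum_range_succ _ a

lemma gf_mono (D : ℕ) : Monotone (gf D) := fun a a' h =>
  Finset.sum_le_sum_of_subset (Finset.range_subset_range.2 h)

lemma gf_cast (D a : ℕ) (h : a ≤ D + 1) :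
    2 * (gf D a : ℤ) = a * (2 * D + 3 - a) := by
  induction a with
  | zero => simp [gf]
  | succ n ih =>
    have hn : n ≤ D := by omega
    have := ih (by omega)
    rw [gf_succ]
    push_cast [Nat.sub_add_cancel, hn]
    have hc : ((D + 1 - n : ℕ) : ℤ) = (D : ℤ) + 1 - n := by omega
    rw [hc] at *
    linarith [this]

lemma gf_inj {D a b a' b' : ℕ} (h1 : a + b ≤ D) (h2 : a' + b' ≤ D)
    (he : gf D a + b = gf D a' + b') : a = a' ∧ b = b' := by
  rcases lt_trichotomy a a' with h | h | h
  · exfalso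
    have hs := gf_succ D a
    have h3 : gf D (a+1) ≤ gf D a' := gf_mono D h
    omega
  · subst h; omega
  · exfalso
    have hs := gf_succ D a'
    have h3 : gf D (a'+1) ≤ gf D a := gf_mono D h
    omega

lemma gf_rep {D n : ℕ} (hn : n < gf D (D+1)) :
    ∃ a b, a + b ≤ D ∧ gf D a + b = n := by
  set P : ℕ → Prop := fun k => gf D k ≤ n with hP
  have hP0 : P 0 := by simp [hP, gf]
  set a := Nat.findGreatest P (D+1) with ha
  have hspec : P a := Nat.findGreatest_spec (Nat.zero_le _) hP0
  have hle : a ≤ D + 1 := Nat.findGreatest_le _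
  have haD : a ≤ D := by
    rcases Nat.eq_or_lt_of_le hle with h | h
    · exfalso; rw [h] at hspec; simp only [hP] at hspec; omega
    · omega
  have hgt : ¬ P (a+1) := by
    exact Nat.findGreatest_is_greatest (k := a+1) (n := D+1) (by omega) (by omega)
  simp only [hP] at hspec hgt
  rw [gf_succ] at hgt
  refine ⟨a, n - gf D a, ?_, ?_⟩ <;> omega

lemma ncard_of_bijOn_Iio {α : Type*} {S : Set α} {f : α → ℕ} {n : ℕ}
    (h : Set.BijOn f S (Set.Iio n)) : S.ncard = n := by
  have him : f '' S = Set.Iio n := h.image_eq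
  have hfin : S.Finite := by
    apply Set.Finite.of_finite_image _ h.injOn
    rw [him, ← Finset.coe_Iio]
    exact (Finset.Iio n).finite_toSet
  have := Set.ncard_image_of_injOn h.injOn
  rw [him] at this
  rw [← this, ← Finset.coe_Iio, Set.ncard_coe_finset, Nat.card_Iio]

lemma finite_of_bijOn_Iio {α : Type*} {S : Set α} {f : α → ℕ} {n : ℕ}
    (h : Set.BijOn f S (Set.Iio n)) : S.Finite := by
  apply Set.Finite.of_finite_image _ h.injOn
  rw [h.image_eq, ← Finset.coe_Iio]
  exact (Finset.Iio n).finite_toSet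




lemma lexRank_eq0 (d a b c : ℕ) (habc : a + b + c = d) :
    lexRank d (a, b, c) = gf d a + b := by
  apply ncard_of_bijOn_Iio (f := fun m => gf d m.1 + m.2.1)
  refine ⟨?_, ?_, ?_⟩
  · rintro ⟨x, y, z⟩ ⟨hmem, hlt⟩
    simp only [MonDeg, LexLt, Set.mem_setOf_eq] at hmem hlt
    simp only [Set.mem_Iio]
    rcases hlt with hx | ⟨hx, hy⟩
    · have hs := gf_succ d x
      have h3 : gf d (x+1) ≤ gf d a := gf_mono d hx
      omega
    · subst hx; omega
  · rintro ⟨x, y, z⟩ ⟨hm1, hl1⟩ ⟨x', y', z'⟩ ⟨hm2, hl2⟩ he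
    simp only [MonDeg, Set.mem_setOf_eq] at hm1 hm2
    simp only at he
    obtain ⟨h1, h2⟩ := gf_inj (D := d) (by omega) (by omega) he
    simp only [Prod.mk.injEq]
    refine ⟨h1, h2, by omega⟩
  · rintro n hn
    simp only [Set.mem_Iio] at hn
    have hbound : gf d a + b ≤ gf d (d+1) := by
      have hs := gf_succ d a
      have h3 : gf d (a+1) ≤ gf d (d+1) := gf_mono d (by omega)
      omega
    obtain ⟨x, y, hxy, hxyn⟩ := gf_rep (D := d) (n := n) (by omega)
    refine ⟨(x, y, d - x - y), ⟨?_, ?_⟩, ?_⟩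
    · simp only [MonDeg, Set.mem_setOf_eq]; omega
    · simp only [LexLt]
      rcases lt_trichotomy x a with h | h | h
      · exact Or.inl h
      · subst h
        refine Or.inr ⟨rfl, by omega⟩
      · exfalso
        have hs := gf_succ d a
        have h3 : gf d (a+1) ≤ gf d x := gf_mono d h
        omega
    · simpa using hxyn

lemma bijOn_MonDeg (D : ℕ) :
    Set.BijOn (fun m : ℕ × ℕ × ℕ => gf D m.1 + m.2.1) (MonDeg D)
      (Set.Iio (gf D (D+1))) := by
  refine ⟨?_, ?_, ?_⟩
  · rintro ⟨x, y, z⟩ hmem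
    simp only [MonDeg, Set.mem_setOf_eq] at hmem
    simp only [Set.mem_Iio]
    have hs := gf_succ D x
    have h3 : gf D (x+1) ≤ gf D (D+1) := gf_mono D (by omega)
    omega
  · rintro ⟨x, y, z⟩ hm1 ⟨x', y', z'⟩ hm2 he
    simp only [MonDeg, Set.mem_setOf_eq] at hm1 hm2
    simp only at he
    obtain ⟨h1, h2⟩ := gf_inj (D := D) (by omega) (by omega) he
    simp only [Prod.mk.injEq]
    exact ⟨h1, h2, by omega⟩
  · rintro n hn
    simp only [Set.mem_Iio] at hn
    obtain ⟨x, y, hxy, hxyn⟩ := gf_rep hn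
    refine ⟨(x, y, D - x - y), ?_, ?_⟩
    · simp only [MonDeg, Set.mem_setOf_eq]; omega
    · simpa using hxyn

lemma gf_top (D : ℕ) : gf D (D+1) = Nat.choose (D+2) 2 := by
  have h2 : 2 * (gf D (D+1) : ℤ) = (D+1) * (2*D+3-(D+1)) := gf_cast D (D+1) le_rfl
  have h3 : 2 * gf D (D+1) = (D+2) * (D+1) := by
    have : (2 * gf D (D+1) : ℤ) = ((D+2) * (D+1) : ℕ) := by push_cast; linarith
    exact_mod_cast this
  rw [Nat.choose_two_right, show D + 2 - 1 = D + 1 from rfl]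
  omega



lemma charN0 (d h : ℕ) (hhd : h ≤ gf d d) (m : ℕ × ℕ × ℕ)
    (hM : m ∈ MonDeg (d+1)) :
    (∀ s ∈ LexSeg d h, ¬ MonDvd s m) ↔
      ((0 < m.2.2 ∧ gf d m.1 + m.2.1 < h) ∨
        (m.2.2 = 0 ∧ 0 < m.2.1 ∧ gf d m.1 + m.2.1 ≤ h)) := by
  obtain ⟨A, B, C⟩ := m
  simp only [MonDeg, Set.mem_setOf_eq] at hM
  dsimp only at hM ⊢
  constructor
  · intro hno
    by_cases hC : 0 < C
    · left
      refine ⟨hC, ?_⟩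
      have hrank : lexRank d (A, B, C-1) = gf d A + B :=
        lexRank_eq0 d A B (C-1) (by omega)
      have hnotseg : (A, B, C-1) ∉ LexSeg d h := fun hseg =>
        hno _ hseg ⟨le_rfl, le_rfl, Nat.sub_le C 1⟩
      simp only [LexSeg, MonDeg, Set.mem_setOf_eq, not_and, not_le] at hnotseg
      have := hnotseg (by omega)
      rw [hrank] at this
      omega
    · by_cases hB : 0 < B
      · right
        refine ⟨by omega, hB, ?_⟩
        have hrank : lexRank d (A, B-1, C) = gf d A + (B-1) :=
          lexRank_eq0 d A (B-1) C (by omega)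
        have hnotseg : (A, B-1, C) ∉ LexSeg d h := fun hseg =>
          hno _ hseg ⟨le_rfl, Nat.sub_le B 1, le_rfl⟩
        simp only [LexSeg, MonDeg, Set.mem_setOf_eq, not_and, not_le] at hnotseg
        have := hnotseg (by omega)
        rw [hrank] at this
        omega
      · exfalso
        have hrank : lexRank d (d, 0, 0) = gf d d + 0 :=
          lexRank_eq0 d d 0 0 (by omega)
        refine hno (d, 0, 0) ⟨?_, ?_⟩ ⟨by dsimp only; omega, Nat.zero_le _, Nat.zero_le _⟩
        · simp only [MonDeg, Set.mem_setOf_eq]; omega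
        · rw [hrank]; omega
  · rintro hP ⟨x, y, z⟩ ⟨hsmem, hsrank⟩ hdvd
    simp only [MonDeg, Set.mem_setOf_eq] at hsmem
    obtain ⟨hd1, hd2, hd3⟩ := hdvd
    dsimp only at hd1 hd2 hd3 hsrank hsmem
    rw [lexRank_eq0 d x y z hsmem] at hsrank
    have hPA : gf d A + B ≤ h ∧ (0 < C → gf d A + B < h) := by omega
    have hcases : (0 < A ∧ x = A-1 ∧ y = B ∧ z = C) ∨
        (0 < B ∧ x = A ∧ y = B-1 ∧ z = C) ∨
        (0 < C ∧ x = A ∧ y = B ∧ z = C-1) := by omega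
    rcases hcases with ⟨hA, hx, hy, hz⟩ | ⟨hB, hx, hy, hz⟩ | ⟨hC, hx, hy, hz⟩
    · subst hx hy hz
      have hstep := gf_succ d (A-1)
      rw [show A - 1 + 1 = A by omega] at hstep
      omega
    · subst hx hy hz
      omega
    · subst hx hy hz
      omega

lemma bijOn_N1 (d h : ℕ) (hhd : h ≤ gf d d) :
    Set.BijOn (fun m : ℕ × ℕ × ℕ => gf d m.1 + m.2.1)
      {m : ℕ × ℕ × ℕ | m.1 + m.2.1 + m.2.2 = d + 1 ∧ 0 < m.2.2 ∧ gf d m.1 + m.2.1 < h}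
      (Set.Iio h) := by
  refine ⟨?_, ?_, ?_⟩
  · rintro ⟨x, y, z⟩ ⟨h1, h2, h3⟩
    exact h3
  · rintro ⟨x, y, z⟩ ⟨hm1, hc1, hr1⟩ ⟨x', y', z'⟩ ⟨hm2, hc2, hr2⟩ he
    dsimp only at *
    obtain ⟨e1, e2⟩ := gf_inj (D := d) (by omega) (by omega) he
    simp only [Prod.mk.injEq]
    exact ⟨e1, e2, by omega⟩
  · rintro n hn
    simp only [Set.mem_Iio] at hn
    have hstep : gf d d ≤ gf d (d+1) := gf_mono d (by omega)
    obtain ⟨x, y, hxy, hxyn⟩ := gf_rep (D := d) (n := n) (by omega)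
    refine ⟨(x, y, d + 1 - x - y), ⟨by dsimp only; omega, by dsimp only; omega, ?_⟩, ?_⟩
      <;> dsimp only <;> omega

lemma bijOn_N2 (d h κ : ℕ) (hκd : κ ≤ d) (hκh : gf d κ ≤ h) (hhκ : h < gf d (κ+1)) :
    Set.BijOn (fun m : ℕ × ℕ × ℕ => m.1)
      {m : ℕ × ℕ × ℕ | m.1 + m.2.1 + m.2.2 = d + 1 ∧ m.2.2 = 0 ∧ 0 < m.2.1 ∧
        gf d m.1 + m.2.1 ≤ h}
      (Set.Iio κ) := by
  refine ⟨?_, ?_, ?_⟩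
  · rintro ⟨x, y, z⟩ ⟨h1, h2, h3, h4⟩
    dsimp only at *
    simp only [Set.mem_Iio]
    by_contra hxκ
    push_neg at hxκ
    have hm : gf d (κ+1) ≤ gf d (x+1) := gf_mono d (by omega)
    have hs := gf_succ d x
    omega
  · rintro ⟨x, y, z⟩ ⟨hm1, hz1, hy1, hr1⟩ ⟨x', y', z'⟩ ⟨hm2, hz2, hy2, hr2⟩ he
    dsimp only at *
    simp only [Prod.mk.injEq]
    exact ⟨he, by omega, by omega⟩
  · rintro a ha
    simp only [Set.mem_Iio] at ha
    have hs := gf_succ d a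
    have hm : gf d (a+1) ≤ gf d κ := gf_mono d (by omega)
    refine ⟨(a, d + 1 - a, 0), ⟨?_, ?_, ?_, ?_⟩, rfl⟩ <;> dsimp only <;> try omega


/-- for `d ≥ 1`, `1 ≤ κ ≤ d` and
`(κ-1)d - κ(κ-3)/2 ≤ i ≤ κd - κ(κ-1)/2`, exactly `d + i + κ` monomials of degree
`d + 1` have no divisor in the degree-`d` lex segment `S` of colength `d + i`;
equivalently, the number of degree-`(d+1)` monomials divisible by some element of `S`
is `C(d+3, 2) - (d + i + κ)`.  (This says `(d+i)^{⟨d⟩} = d + i + κ`.) -/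
theorem stmt6 (d i κ : ℕ) (hd : 1 ≤ d)
    (hκ1 : 1 ≤ κ) (hκd : κ ≤ d)
    (hlow : ((κ : ℤ) - 1) * d - (κ : ℤ) * ((κ : ℤ) - 3) / 2 ≤ (i : ℤ))
    (hup : (i : ℤ) ≤ (κ : ℤ) * d - (κ : ℤ) * ((κ : ℤ) - 1) / 2) :
    Set.ncard {m | m ∈ MonDeg (d + 1) ∧ ∀ s ∈ LexSeg d (d + i), ¬ MonDvd s m}
        = d + i + κ ∧
    Set.ncard {m | m ∈ MonDeg (d + 1) ∧ ∃ s ∈ LexSeg d (d + i), MonDvd s m}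
        = Nat.choose (d + 3) 2 - (d + i + κ) := by

  -- arithmetic preliminaries
  have hev1 : (2 : ℤ) ∣ (κ : ℤ) * ((κ : ℤ) - 1) := by
    obtain ⟨k, hk⟩ := Int.even_mul_succ_self ((κ : ℤ) - 1)
    exact ⟨k, by linear_combination hk⟩
  have hev2 : (2 : ℤ) ∣ (κ : ℤ) * ((κ : ℤ) - 3) := by
    obtain ⟨k, hk⟩ := hev1
    exact ⟨k - κ, by linear_combination hk⟩
  have hq1 : 2 * ((κ : ℤ) * ((κ : ℤ) - 1) / 2) = (κ : ℤ) * ((κ : ℤ) - 1) := by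
    omega
  have hq2 : 2 * ((κ : ℤ) * ((κ : ℤ) - 3) / 2) = (κ : ℤ) * ((κ : ℤ) - 3) := by
    omega
  have hlow2 : 2 * ((κ : ℤ) - 1) * d - (κ : ℤ) * ((κ : ℤ) - 3) ≤ 2 * i := by linarith
  have hup2 : 2 * (i : ℤ) ≤ 2 * (κ : ℤ) * d - (κ : ℤ) * ((κ : ℤ) - 1) := by linarith
  have hgκ := gf_cast d κ (by omega)
  have hgκ1 := gf_cast d (κ+1) (by omega)
  have hgd := gf_cast d d (by omega)
  push_cast at hgκ hgκ1 hgd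
  have hκh : gf d κ ≤ d + i := by
    have : (gf d κ : ℤ) ≤ (d : ℤ) + i := by linarith [hgκ, hlow2]
    exact_mod_cast this
  have hhκ : d + i < gf d (κ+1) := by
    have : (d : ℤ) + i < (gf d (κ+1) : ℤ) := by linarith [hgκ1, hup2]
    exact_mod_cast this
  have hhd : d + i ≤ gf d d := by
    have hκd' : (κ : ℤ) ≤ (d : ℤ) := by exact_mod_cast hκd
    have : (d : ℤ) + i ≤ (gf d d : ℤ) := by
      nlinarith [hgd, hup2, sq_nonneg ((d : ℤ) - κ), hκd']
    exact_mod_cast this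
  -- the two pieces
  set N1 : Set (ℕ × ℕ × ℕ) :=
    {m | m.1 + m.2.1 + m.2.2 = d + 1 ∧ 0 < m.2.2 ∧ gf d m.1 + m.2.1 < d + i} with hN1
  set N2 : Set (ℕ × ℕ × ℕ) :=
    {m | m.1 + m.2.1 + m.2.2 = d + 1 ∧ m.2.2 = 0 ∧ 0 < m.2.1 ∧
      gf d m.1 + m.2.1 ≤ d + i} with hN2
  have hb1 := bijOn_N1 d (d + i) hhd
  have hb2 := bijOn_N2 d (d + i) κ hκd hκh hhκ
  have hcard1 : N1.ncard = d + i := ncard_of_bijOn_Iio hb1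
  have hcard2 : N2.ncard = κ := ncard_of_bijOn_Iio hb2
  have hfin1 : N1.Finite := finite_of_bijOn_Iio hb1
  have hfin2 : N2.Finite := finite_of_bijOn_Iio hb2
  have hdisj : Disjoint N1 N2 := by
    rw [Set.disjoint_left]
    rintro m ⟨_, hc, _⟩ ⟨_, hz, _⟩
    omega
  have hTA : {m | m ∈ MonDeg (d + 1) ∧ ∀ s ∈ LexSeg d (d + i), ¬ MonDvd s m}
      = N1 ∪ N2 := by
    ext m
    simp only [Set.mem_setOf_eq, Set.mem_union, hN1, hN2]
    constructor
    · rintro ⟨hmem, hno⟩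
      have hP := (charN0 d (d + i) hhd m hmem).1 hno
      have hsum : m.1 + m.2.1 + m.2.2 = d + 1 := hmem
      rcases hP with ⟨h1, h2⟩ | ⟨h1, h2, h3⟩
      · exact Or.inl ⟨hsum, h1, h2⟩
      · exact Or.inr ⟨hsum, h1, h2, h3⟩
    · rintro (⟨hsum, h1, h2⟩ | ⟨hsum, h1, h2, h3⟩) <;>
        [(refine ⟨hsum, (charN0 d (d + i) hhd m hsum).2 (Or.inl ⟨h1, h2⟩)⟩);
         (refine ⟨hsum, (charN0 d (d + i) hhd m hsum).2 (Or.inr ⟨h1, h2, h3⟩)⟩)]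
  have hcardTA : {m | m ∈ MonDeg (d + 1) ∧
      ∀ s ∈ LexSeg d (d + i), ¬ MonDvd s m}.ncard = d + i + κ := by
    rw [hTA, Set.ncard_union_eq hdisj hfin1 hfin2, hcard1, hcard2]
  refine ⟨hcardTA, ?_⟩
  -- second part
  have hbM := bijOn_MonDeg (d + 1)
  have hfinM : (MonDeg (d + 1)).Finite := finite_of_bijOn_Iio hbM
  have hcardM : (MonDeg (d + 1)).ncard = Nat.choose (d + 3) 2 := by
    rw [ncard_of_bijOn_Iio hbM, gf_top]
  have hTB : {m | m ∈ MonDeg (d + 1) ∧ ∃ s ∈ LexSeg d (d + i), MonDvd s m}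
      = MonDeg (d + 1) \
        {m | m ∈ MonDeg (d + 1) ∧ ∀ s ∈ LexSeg d (d + i), ¬ MonDvd s m} := by
    ext m
    simp only [Set.mem_setOf_eq, Set.mem_diff, not_and, not_forall]
    constructor
    · rintro ⟨hmem, s, hs, hdvd⟩
      exact ⟨hmem, fun _ => ⟨s, hs, by simpa using hdvd⟩⟩
    · rintro ⟨hmem, hne⟩
      obtain ⟨s, hs, hdvd⟩ := hne hmem
      exact ⟨hmem, s, hs, by simpa using hdvd⟩
  have hfinTA : {m | m ∈ MonDeg (d + 1) ∧
      ∀ s ∈ LexSeg d (d + i), ¬ MonDvd s m}.Finite := by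
    rw [hTA]; exact hfin1.union hfin2
  rw [hTB, Set.ncard_diff (fun m hm => hm.1) hfinTA, hcardM, hcardTA]
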